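/- Let α ∈ (0,1), and for each n ≥ 1 let L_{n,1}, …, L_{n,n} be real numbers. Let (v̂_n) be a sequence of reals with v̂_n → v for some v ∈ ℝ, and suppose (1/n)·∑_{i=1}^n (L_{n,i} − v)⁺ → m for some m ∈ ℝ. Then the CVaR estimator ĉ_n = v̂_n + (1/(n(1−α)))·∑_{i=1}^n (L_{n,i} − v̂_n)⁺ converges to v + m/(1−α). -/

import Mathlib

open Filter

/-- Deterministic convergence of the CVaR estimator: if `v̂_n → v` and the
sample averages `(1/n)·∑_{i<n} (L_{n,i} − v)⁺ → m`, then
`ĉ_n = v̂_n + (1/(n(1−α)))·∑_{i<n} (L_{n,i} − v̂_n)⁺ → v + m/(1−α)`. -/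
theorem stmt_7 (α : ℝ) (hα : α ∈ Set.Ioo (0:ℝ) 1) (L : ℕ → ℕ → ℝ)
    (vhat : ℕ → ℝ) (v m : ℝ)
    (hv : Tendsto vhat atTop (nhds v))
    (hm : Tendsto (fun n : ℕ => (1 / (n : ℝ)) * ∑ i ∈ Finset.range n, max (L n i - v) 0)
      atTop (nhds m)) :
    Tendsto (fun n : ℕ => vhat n +
        (1 / ((n : ℝ) * (1 - α))) * ∑ i ∈ Finset.range n, max (L n i - vhat n) 0)
      atTop (nhds (v + m / (1 - α))) := by
  set A : ℕ → ℝ := fun n => (1 / (n : ℝ)) * ∑ i ∈ Finset.range n, max (L n i - vhat n) 0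
  set B : ℕ → ℝ := fun n => (1 / (n : ℝ)) * ∑ i ∈ Finset.range n, max (L n i - v) 0
  have hbound : ∀ n : ℕ, |A n - B n| ≤ |vhat n - v| := by
    intro n
    rcases Nat.eq_zero_or_pos n with h0 | hpos
    · simp [A, B, h0]
    · have hn : (0:ℝ) < n := by exact_mod_cast hpos
      have : A n - B n = (1 / (n : ℝ)) * ∑ i ∈ Finset.range n,
          (max (L n i - vhat n) 0 - max (L n i - v) 0) := by
        simp [A, B, Finset.sum_sub_distrib, mul_sub]
      rw [this, abs_mul]
      have h1 : |(1 : ℝ) / n| = 1 / n := abs_of_pos (by positivity)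
      rw [h1]
      have hsum : |∑ i ∈ Finset.range n, (max (L n i - vhat n) 0 - max (L n i - v) 0)|
          ≤ ∑ i ∈ Finset.range n, |vhat n - v| := by
        refine (Finset.abs_sum_le_sum_abs _ _).trans (Finset.sum_le_sum fun i _ => ?_)
        have := abs_max_sub_max_le_abs (L n i - vhat n) (L n i - v) 0
        calc |max (L n i - vhat n) 0 - max (L n i - v) 0| ≤ |(L n i - vhat n) - (L n i - v)| :=
              abs_max_sub_max_le_abs _ _ _
          _ = |vhat n - v| := by rw [show (L n i - vhat n) - (L n i - v) = -(vhat n - v) by ring, abs_neg]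
      calc (1 / (n:ℝ)) * |∑ i ∈ Finset.range n, (max (L n i - vhat n) 0 - max (L n i - v) 0)|
          ≤ (1 / (n:ℝ)) * (∑ i ∈ Finset.range n, |vhat n - v|) := by
            exact mul_le_mul_of_nonneg_left hsum (by positivity)
        _ = |vhat n - v| := by
            rw [Finset.sum_const, Finset.card_range, nsmul_eq_mul]
            field_simp
  have hdiff : Tendsto (fun n => A n - B n) atTop (nhds 0) := by
    have h0 : Tendsto (fun n => |vhat n - v|) atTop (nhds 0) := by
      simpa using (hv.sub (tendsto_const_nhds (x := v))).abs
    refine squeeze_zero_norm (fun n => ?_) h0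
    simpa [Real.norm_eq_abs] using hbound n
  have hA : Tendsto A atTop (nhds m) := by
    have := hdiff.add hm
    simpa using this
  have hα1 : (1:ℝ) - α ≠ 0 := by
    have := hα.2; linarith
  have hmain : Tendsto (fun n => vhat n + (1 / (1 - α)) * A n) atTop
      (nhds (v + (1 / (1 - α)) * m)) := hv.add ((tendsto_const_nhds).mul hA)
  have heq : (fun n : ℕ => vhat n +
        (1 / ((n : ℝ) * (1 - α))) * ∑ i ∈ Finset.range n, max (L n i - vhat n) 0)
      = fun n => vhat n + (1 / (1 - α)) * A n := by
    funext n
    simp only [A, one_div, mul_inv]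
    ring
  rw [heq]
  have : v + (1 / (1 - α)) * m = v + m / (1 - α) := by ring
  rw [← this]
  exact hmain
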